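/- För every θ ∈ (0,1) and every real μ ≥ 1 there exists a constant C > 0, independent of n, such that for every integer n ≥ 1 and every vector u ∈ ℝⁿ with nonnegative entries, N_{θ,n}(𝔏_n(u^μ)) ≤ C · N_{θ,n}(𝔏_n u) · (max_{1≤i≤n} u_i)^{μ−1}, where u^μ ∈ ℝⁿ denotes the vector with entries u_i^μ. (Discrete Sobolev power estimate ‖u^μ‖_{𝐇^θ_n} ≲ ‖u‖_{𝐇^θ_n}‖u‖_∞^{μ−1} in Gagliardo-seminorm form.) -/

import Mathlib

open MeasureTheory

/-- The continuous piecewise-linear interpolant `𝔏_n u : [0,1] → ℝ` of a vector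
`u` (entries `u 1, …, u n`, with the convention `u₀ = u_{n+1} = 0`): it is affine on
each cell `Δ_i = [i h_n, (i+1) h_n]`, `h_n = 1/(n+1)`, and takes value `u i` at `i h_n`. -/
noncomputable def linInterp (n : ℕ) (u : ℕ → ℝ) : ℝ → ℝ := fun x =>
  ∑ i ∈ Finset.Icc 1 n, u i * max 0 (1 - |((n : ℝ) + 1) * x - (i : ℝ)|)

/-- The squared truncated Gagliardo seminorm
`N_{θ,n}(f)² = ∑_{|i-j|≤1, 0≤i,j≤n} ∬_{Δ_i×Δ_j} |f(x)-f(y)|²/|x-y|^{1+2θ} dx dy`,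
with cells `Δ_i = [i h_n, (i+1) h_n]`, `h_n = 1/(n+1)`. -/
noncomputable def gagliardoSq (θ : ℝ) (n : ℕ) (f : ℝ → ℝ) : ℝ :=
  ∑ i ∈ Finset.range (n + 1), ∑ j ∈ Finset.range (n + 1),
    if i ≤ j + 1 ∧ j ≤ i + 1 then
      ∫ x in Set.Icc ((i : ℝ) / ((n : ℝ) + 1)) (((i : ℝ) + 1) / ((n : ℝ) + 1)),
        ∫ y in Set.Icc ((j : ℝ) / ((n : ℝ) + 1)) (((j : ℝ) + 1) / ((n : ℝ) + 1)),
          |f x - f y| ^ 2 / |x - y| ^ (1 + 2 * θ)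
    else 0

/-- The truncated Gagliardo seminorm `N_{θ,n}(f)`. -/
noncomputable def gagliardo (θ : ℝ) (n : ℕ) (f : ℝ → ℝ) : ℝ :=
  Real.sqrt (gagliardoSq θ n f)


open intervalIntegral

section Aux

lemma rpow_diff_le {μ M a b : ℝ} (hμ : 1 ≤ μ) (hb : 0 ≤ b) (hba : b ≤ a) (haM : a ≤ M) :
    a ^ μ - b ^ μ ≤ μ * M ^ (μ - 1) * (a - b) := by
  rcases eq_or_lt_of_le hba with h | h
  · subst h; simp
  · obtain ⟨c, hc, hderiv⟩ := exists_hasDerivAt_eq_slope (fun x => x ^ μ)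
      (fun x => μ * x ^ (μ - 1)) h
      (fun x _ => (Real.hasDerivAt_rpow_const (Or.inr hμ)).continuousAt.continuousWithinAt)
      (fun x _ => Real.hasDerivAt_rpow_const (Or.inr hμ))
    have hc0 : 0 ≤ c := le_trans hb hc.1.le
    have hcM : c ≤ M := le_trans hc.2.le haM
    rw [eq_div_iff (by intro hh; linarith [sub_eq_zero.mp hh] : a - b ≠ 0)] at hderiv
    have hkey : a ^ μ - b ^ μ = μ * c ^ (μ - 1) * (a - b) := hderiv.symm
    rw [hkey]
    have : c ^ (μ - 1) ≤ M ^ (μ - 1) :=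
      Real.rpow_le_rpow hc0 hcM (by linarith)
    have hμ0 : (0:ℝ) < μ := by linarith
    exact mul_le_mul_of_nonneg_right (mul_le_mul_of_nonneg_left this hμ0.le)
      (sub_nonneg.mpr hba)

lemma abs_rpow_diff_le {μ M a b : ℝ} (hμ : 1 ≤ μ) (ha : 0 ≤ a) (hb : 0 ≤ b)
    (haM : a ≤ M) (hbM : b ≤ M) :
    |a ^ μ - b ^ μ| ≤ μ * M ^ (μ - 1) * |a - b| := by
  rcases le_total b a with h | h
  · rw [abs_of_nonneg (sub_nonneg.mpr (Real.rpow_le_rpow hb h (by linarith))),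
      abs_of_nonneg (sub_nonneg.mpr h)]
    exact rpow_diff_le hμ hb h haM
  · rw [abs_sub_comm, abs_sub_comm a b,
      abs_of_nonneg (sub_nonneg.mpr (Real.rpow_le_rpow ha h (by linarith))),
      abs_of_nonneg (sub_nonneg.mpr h)]
    exact rpow_diff_le hμ ha h hbM

lemma sum_if_near_le {m : ℕ} {e : ℕ → ℝ} (he : ∀ i, 0 ≤ e i) :
    (∑ i ∈ Finset.range m, ∑ j ∈ Finset.range m,
        if i ≤ j + 1 ∧ j ≤ i + 1 then e i else 0) ≤ 3 * ∑ i ∈ Finset.range m, e i := by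
  rw [Finset.mul_sum]
  apply Finset.sum_le_sum
  intro i _
  rw [← Finset.sum_filter, Finset.sum_const]
  have hcard : ((Finset.range m).filter fun j => i ≤ j + 1 ∧ j ≤ i + 1).card ≤ 3 := by
    calc ((Finset.range m).filter fun j => i ≤ j + 1 ∧ j ≤ i + 1).card
        ≤ (Finset.Icc (i - 1) (i + 1)).card := by
          apply Finset.card_le_card
          intro j hj
          simp only [Finset.mem_filter] at hj
          simp only [Finset.mem_Icc]
          omega
      _ ≤ 3 := by rw [Nat.card_Icc]; omega
  rw [nsmul_eq_mul]
  apply mul_le_mul_of_nonneg_right _ (he i)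
  exact_mod_cast hcard

lemma sum_comb {m : ℕ} {e : ℕ → ℝ} (he : ∀ i, 0 ≤ e i) :
    (∑ i ∈ Finset.range m, ∑ j ∈ Finset.range m,
        if i ≤ j + 1 ∧ j ≤ i + 1 then e i + e j else 0)
      ≤ 6 * ∑ i ∈ Finset.range m, e i := by
  have hsplit : ∀ i j : ℕ, (if i ≤ j + 1 ∧ j ≤ i + 1 then e i + e j else 0)
      = (if i ≤ j + 1 ∧ j ≤ i + 1 then e i else 0)
        + (if i ≤ j + 1 ∧ j ≤ i + 1 then e j else 0) := by
    intro i j; split <;> simp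
  simp_rw [hsplit, Finset.sum_add_distrib]
  have h1 := sum_if_near_le (m := m) he
  have h2 : (∑ i ∈ Finset.range m, ∑ j ∈ Finset.range m,
      if i ≤ j + 1 ∧ j ≤ i + 1 then e j else 0) ≤ 3 * ∑ i ∈ Finset.range m, e i := by
    rw [Finset.sum_comm]
    have := sum_if_near_le (m := m) he
    calc (∑ j ∈ Finset.range m, ∑ i ∈ Finset.range m,
        if i ≤ j + 1 ∧ j ≤ i + 1 then e j else 0)
        = ∑ i ∈ Finset.range m, ∑ j ∈ Finset.range m,
            if i ≤ j + 1 ∧ j ≤ i + 1 then e i else 0 := by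
          apply Finset.sum_congr rfl; intro j _
          apply Finset.sum_congr rfl; intro i _
          congr 1
          exact propext (and_comm)
      _ ≤ 3 * ∑ i ∈ Finset.range m, e i := this
  linarith

variable {p : ℝ}

lemma ii_left (hp : -1 < p) (x c : ℝ) :
    IntervalIntegrable (fun y => (x - y) ^ p) volume c x := by
  have := (intervalIntegrable_rpow' hp (a := x - c) (b := x - x)).comp_sub_left x
  simpa using this

lemma ii_right (hp : -1 < p) (x c : ℝ) :
    IntervalIntegrable (fun y => (y - x) ^ p) volume x c := by
  have := (intervalIntegrable_rpow' hp (a := x - x) (b := c - x)).comp_sub_right x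
  simpa using this

lemma ii_abs_left (hp : -1 < p) {a x : ℝ} (hax : a ≤ x) :
    IntervalIntegrable (fun y => |x - y| ^ p) volume a x := by
  rw [intervalIntegrable_iff', Set.uIcc_of_le hax]
  have h := ii_left hp x a
  rw [intervalIntegrable_iff', Set.uIcc_of_le hax] at h
  exact h.congr_fun (fun y hy => by rw [abs_of_nonneg (by linarith [hy.2] : 0 ≤ x - y)])
    measurableSet_Icc

lemma ii_abs_right (hp : -1 < p) {x b : ℝ} (hxb : x ≤ b) :
    IntervalIntegrable (fun y => |x - y| ^ p) volume x b := by
  rw [intervalIntegrable_iff', Set.uIcc_of_le hxb]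
  have h := ii_right hp x b
  rw [intervalIntegrable_iff', Set.uIcc_of_le hxb] at h
  exact h.congr_fun (fun y hy => by
    rw [abs_sub_comm, abs_of_nonneg (by linarith [hy.1] : 0 ≤ y - x)]) measurableSet_Icc

lemma ion_abs (hp : -1 < p) (x : ℝ) {a b : ℝ} :
    IntegrableOn (fun y => |x - y| ^ p) (Set.Icc a b) := by
  have h1 := ii_abs_left hp (min_le_right a x)
  have h2 := ii_abs_right hp (le_max_right b x)
  rw [intervalIntegrable_iff', Set.uIcc_of_le (min_le_right a x)] at h1
  rw [intervalIntegrable_iff', Set.uIcc_of_le (le_max_right b x)] at h2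
  apply (h1.union h2).mono_set
  intro y hy
  rcases le_total y x with h | h
  · exact Or.inl ⟨(min_le_left a x).trans hy.1, h⟩
  · exact Or.inr ⟨h, hy.2.trans (le_max_left b x)⟩

lemma int_left (hp : -1 < p) {a x : ℝ} (hax : a ≤ x) :
    ∫ y in a..x, |x - y| ^ p = (x - a) ^ (p + 1) / (p + 1) := by
  have e1 : ∫ y in a..x, |x - y| ^ p = ∫ y in a..x, (x - y) ^ p := by
    apply intervalIntegral.integral_congr
    intro y hy
    dsimp only
    rw [Set.uIcc_of_le hax] at hy
    rw [abs_of_nonneg (by linarith [hy.2] : 0 ≤ x - y)]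
  rw [e1, intervalIntegral.integral_comp_sub_left (fun t => t ^ p) x, sub_self,
    integral_rpow (Or.inl hp), Real.zero_rpow (by linarith : p + 1 ≠ 0), sub_zero]

lemma int_right (hp : -1 < p) {x b : ℝ} (hxb : x ≤ b) :
    ∫ y in x..b, |x - y| ^ p = (b - x) ^ (p + 1) / (p + 1) := by
  have e1 : ∫ y in x..b, |x - y| ^ p = ∫ y in x..b, (y - x) ^ p := by
    apply intervalIntegral.integral_congr
    intro y hy
    dsimp only
    rw [Set.uIcc_of_le hxb] at hy
    rw [abs_sub_comm, abs_of_nonneg (by linarith [hy.1] : 0 ≤ y - x)]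
  rw [e1, intervalIntegral.integral_comp_sub_right (fun t => t ^ p) x, sub_self,
    integral_rpow (Or.inl hp), Real.zero_rpow (by linarith : p + 1 ≠ 0), sub_zero]

/-- F1: diagonal inner integral. -/
lemma inner_diag (hp : -1 < p) {a b x : ℝ} (hax : a ≤ x) (hxb : x ≤ b) :
    ∫ y in Set.Icc a b, |x - y| ^ p
      = ((x - a) ^ (p + 1) + (b - x) ^ (p + 1)) / (p + 1) := by
  rw [integral_Icc_eq_integral_Ioc, ← intervalIntegral.integral_of_le (hax.trans hxb),
    ← intervalIntegral.integral_add_adjacent_intervals (ii_abs_left hp hax)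
      (ii_abs_right hp hxb), int_left hp hax, int_right hp hxb, add_div]

/-- F2: right-adjacent inner integral (cell to the right of x). -/
lemma inner_right (hp : -1 < p) {c d x : ℝ} (hxc : x ≤ c) (hcd : c ≤ d) :
    ∫ y in Set.Icc c d, |x - y| ^ p
      = ((d - x) ^ (p + 1) - (c - x) ^ (p + 1)) / (p + 1) := by
  rw [integral_Icc_eq_integral_Ioc, ← intervalIntegral.integral_of_le hcd]
  have e1 : ∫ y in c..d, |x - y| ^ p = ∫ y in c..d, (y - x) ^ p := by
    apply intervalIntegral.integral_congr
    intro y hy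
    dsimp only
    rw [Set.uIcc_of_le hcd] at hy
    rw [abs_sub_comm, abs_of_nonneg (by linarith [hy.1] : 0 ≤ y - x)]
  rw [e1, intervalIntegral.integral_comp_sub_right (fun t => t ^ p) x,
    integral_rpow (Or.inl (by linarith : (-1:ℝ) < p) )]

/-- F2': left-adjacent inner integral (cell to the left of x). -/
lemma inner_left (hp : -1 < p) {c d x : ℝ} (hcd : c ≤ d) (hdx : d ≤ x) :
    ∫ y in Set.Icc c d, |x - y| ^ p
      = ((x - c) ^ (p + 1) - (x - d) ^ (p + 1)) / (p + 1) := by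
  rw [integral_Icc_eq_integral_Ioc, ← intervalIntegral.integral_of_le hcd]
  have e1 : ∫ y in c..d, |x - y| ^ p = ∫ y in c..d, (x - y) ^ p := by
    apply intervalIntegral.integral_congr
    intro y hy
    dsimp only
    rw [Set.uIcc_of_le hcd] at hy
    rw [abs_of_nonneg (by linarith [hy.2] : 0 ≤ x - y)]
  rw [e1, intervalIntegral.integral_comp_sub_left (fun t => t ^ p) x,
    integral_rpow (Or.inl hp)]

variable {q : ℝ}

lemma ion_outer (hq : 0 < q) {a b : ℝ} (hab : a ≤ b) :
    IntegrableOn (fun x => (x - a) ^ q + (b - x) ^ q) (Set.Icc a b) := by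
  have hq' : (-1:ℝ) < q := by linarith
  have h := (ii_right hq' a b).add (ii_left hq' b a)
  rwa [intervalIntegrable_iff', Set.uIcc_of_le hab] at h

lemma outer_val (hq : 0 < q) {a b : ℝ} (hab : a ≤ b) :
    ∫ x in Set.Icc a b, ((x - a) ^ q + (b - x) ^ q)
      = 2 * (b - a) ^ (q + 1) / (q + 1) := by
  have hq' : (-1:ℝ) < q := by linarith
  rw [integral_Icc_eq_integral_Ioc, ← intervalIntegral.integral_of_le hab,
    intervalIntegral.integral_add (ii_right hq' a b) (ii_left hq' b a)]
  have e1 : ∫ x in a..b, (x - a) ^ q = (b - a) ^ (q + 1) / (q + 1) := by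
    rw [intervalIntegral.integral_comp_sub_right (fun t => t ^ q) a, sub_self,
      integral_rpow (Or.inl hq'), Real.zero_rpow (by linarith : q + 1 ≠ 0), sub_zero]
  have e2 : ∫ x in a..b, (b - x) ^ q = (b - a) ^ (q + 1) / (q + 1) := by
    rw [intervalIntegral.integral_comp_sub_left (fun t => t ^ q) b, sub_self,
      integral_rpow (Or.inl hq'), Real.zero_rpow (by linarith : q + 1 ≠ 0), sub_zero]
  rw [e1, e2]; ring

lemma two_rpow_le_four (hq0 : 0 < q) (hq2 : q ≤ 2) : (2:ℝ) ^ q ≤ 4 := by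
  have : (2:ℝ) ^ q ≤ (2:ℝ) ^ (2:ℝ) := Real.rpow_le_rpow_of_exponent_le one_le_two hq2
  calc (2:ℝ) ^ q ≤ (2:ℝ) ^ (2:ℝ) := this
    _ = 4 := by
      rw [show ((2:ℝ):ℝ) = ((2:ℕ):ℝ) by norm_num, Real.rpow_natCast]; norm_num

lemma ratio_bound (hq0 : 0 < q) (hq2 : q ≤ 2) {h A : ℝ} (hA : 0 ≤ A) (hAh : A ≤ h) :
    (A + h) ^ q - A ^ q ≤ 16 * ((h - A) ^ q + A ^ q) := by
  have hh : 0 ≤ h := hA.trans hAh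
  have step1 : (A + h) ^ q ≤ 4 * h ^ q := by
    calc (A + h) ^ q ≤ (2 * h) ^ q :=
          Real.rpow_le_rpow (by linarith) (by linarith) hq0.le
      _ = 2 ^ q * h ^ q := Real.mul_rpow (by norm_num) hh
      _ ≤ 4 * h ^ q :=
          mul_le_mul_of_nonneg_right (two_rpow_le_four hq0 hq2) (Real.rpow_nonneg hh q)
  have step2 : h ^ q ≤ 4 * ((h - A) ^ q + A ^ q) := by
    rcases le_total A (h - A) with hc | hc
    · calc h ^ q ≤ (2 * (h - A)) ^ q :=
            Real.rpow_le_rpow hh (by linarith) hq0.le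
        _ = 2 ^ q * (h - A) ^ q := Real.mul_rpow (by norm_num) (by linarith)
        _ ≤ 4 * ((h - A) ^ q + A ^ q) := by
            have h4 := two_rpow_le_four hq0 hq2
            have h5 := Real.rpow_nonneg (by linarith : (0:ℝ) ≤ h - A) q
            have h6 := Real.rpow_nonneg hA q
            nlinarith
    · calc h ^ q ≤ (2 * A) ^ q :=
            Real.rpow_le_rpow hh (by linarith) hq0.le
        _ = 2 ^ q * A ^ q := Real.mul_rpow (by norm_num) hA
        _ ≤ 4 * ((h - A) ^ q + A ^ q) := by
            have h4 := two_rpow_le_four hq0 hq2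
            have h5 := Real.rpow_nonneg (by linarith : (0:ℝ) ≤ h - A) q
            have h6 := Real.rpow_nonneg hA q
            nlinarith
  have h6 := Real.rpow_nonneg hA q
  linarith


/-- The effective vector with the boundary convention. -/
noncomputable def vv (n : ℕ) (u : ℕ → ℝ) (j : ℕ) : ℝ :=
  if j ∈ Finset.Icc 1 n then u j else 0

lemma linInterp_on_cell (n i : ℕ) (u : ℕ → ℝ) (hi : i ≤ n) {x : ℝ}
    (hx : x ∈ Set.Icc ((i : ℝ) / ((n : ℝ) + 1)) (((i : ℝ) + 1) / ((n : ℝ) + 1))) :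
    linInterp n u x
      = vv n u i + (vv n u (i + 1) - vv n u i) * (((n : ℝ) + 1) * x - (i : ℝ)) := by
  have hn1 : (0:ℝ) < (n : ℝ) + 1 := by positivity
  set t : ℝ := ((n : ℝ) + 1) * x - (i : ℝ) with ht
  have ht0 : 0 ≤ t := by
    have := (div_le_iff₀ hn1).mp hx.1
    simp only [ht]; nlinarith
  have ht1 : t ≤ 1 := by
    have := (le_div_iff₀ hn1).mp hx.2
    simp only [ht]; nlinarith
  have hhat : ∀ j ∈ Finset.Icc 1 n, j ≠ i → j ≠ i + 1 →
      max 0 (1 - |((n : ℝ) + 1) * x - (j : ℝ)|) = 0 := by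
    intro j hj hji hji1
    apply max_eq_left
    rw [sub_nonpos]
    rcases lt_or_gt_of_ne hji with h | h
    · -- j < i
      have hj1 : (j : ℝ) ≤ (i : ℝ) - 1 := by
        have h' : j + 1 ≤ i := h
        have : (j:ℝ) + 1 ≤ (i:ℝ) := by exact_mod_cast h'
        linarith
      calc (1:ℝ) ≤ ((n : ℝ) + 1) * x - (j : ℝ) := by linarith [ht0]
        _ ≤ |((n : ℝ) + 1) * x - (j : ℝ)| := le_abs_self _
    · -- j > i, j ≠ i+1, so j ≥ i+2
      have : i + 2 ≤ j := by omega
      have hj1 : (i : ℝ) + 2 ≤ (j : ℝ) := by exact_mod_cast this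
      calc (1:ℝ) ≤ (j : ℝ) - ((n : ℝ) + 1) * x := by linarith [ht1]
        _ ≤ |((n : ℝ) + 1) * x - (j : ℝ)| := by rw [abs_sub_comm]; exact le_abs_self _
  have hsum : linInterp n u x
      = (if i ∈ Finset.Icc 1 n then u i * max 0 (1 - |((n : ℝ) + 1) * x - (i : ℝ)|) else 0)
        + (if i + 1 ∈ Finset.Icc 1 n then
            u (i + 1) * max 0 (1 - |((n : ℝ) + 1) * x - ((i : ℝ) + 1)|) else 0) := by
    unfold linInterp
    have : ∀ j ∈ Finset.Icc 1 n,
        u j * max 0 (1 - |((n : ℝ) + 1) * x - (j : ℝ)|)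
          = (if j = i then u j * max 0 (1 - |((n : ℝ) + 1) * x - (j : ℝ)|) else 0)
            + (if j = i + 1 then u j * max 0 (1 - |((n : ℝ) + 1) * x - (j : ℝ)|) else 0) := by
      intro j hj
      by_cases h1 : j = i
      · subst h1; simp [Nat.succ_ne_self]
      · by_cases h2 : j = i + 1
        · subst h2; simp [h1]
        · rw [hhat j hj h1 h2]
          simp [h1, h2]
    rw [Finset.sum_congr rfl this, Finset.sum_add_distrib,
      Finset.sum_ite_eq' (Finset.Icc 1 n) i, Finset.sum_ite_eq' (Finset.Icc 1 n) (i+1)]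
    congr 2
    push_cast
    ring_nf
  have habs_i : |((n : ℝ) + 1) * x - (i : ℝ)| = t := abs_of_nonneg ht0
  have habs_i1 : |((n : ℝ) + 1) * x - ((i : ℝ) + 1)| = 1 - t := by
    rw [show ((n : ℝ) + 1) * x - ((i : ℝ) + 1) = -(1 - t) by ring, abs_neg]
    exact abs_of_nonneg (by linarith)
  rw [hsum]
  unfold vv
  rw [habs_i, habs_i1]
  rw [max_eq_right (by linarith : (0:ℝ) ≤ 1 - t), show (1:ℝ) - (1 - t) = t by ring,
    max_eq_right ht0]
  split_ifs with h1 h2 h2 <;> ring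


/-- pointwise bound on the Gagliardo integrand from a Lipschitz-type bound. -/
lemma integrand_le {θ : ℝ} (hθ0 : 0 < θ) (f : ℝ → ℝ) {K x y : ℝ} (hK : 0 ≤ K)
    (hf : |f x - f y| ≤ K * |x - y|) :
    |f x - f y| ^ 2 / |x - y| ^ (1 + 2 * θ) ≤ K ^ 2 * |x - y| ^ (1 - 2 * θ) := by
  rcases eq_or_ne x y with h | h
  · subst h
    simp only [sub_self, abs_zero]
    rw [Real.zero_rpow (by intro hh; linarith : 1 + 2 * θ ≠ 0), div_zero]
    positivity
  · have h0 : 0 < |x - y| := abs_pos.mpr (sub_ne_zero.mpr h)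
    have h1 : |f x - f y| ^ 2 ≤ K ^ 2 * |x - y| ^ 2 := by
      calc |f x - f y| ^ 2 ≤ (K * |x - y|) ^ 2 := by
            apply pow_le_pow_left₀ (abs_nonneg _) hf
        _ = K ^ 2 * |x - y| ^ 2 := by ring
    have h2 : (0:ℝ) < |x - y| ^ (1 + 2 * θ) := Real.rpow_pos_of_pos h0 _
    calc |f x - f y| ^ 2 / |x - y| ^ (1 + 2 * θ)
        ≤ K ^ 2 * |x - y| ^ 2 / |x - y| ^ (1 + 2 * θ) := by
          exact (div_le_div_iff_of_pos_right h2).mpr h1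
      _ = K ^ 2 * |x - y| ^ (1 - 2 * θ) := by
          rw [mul_div_assoc]
          congr 1
          rw [← Real.rpow_natCast |x - y| 2, ← Real.rpow_sub h0]
          norm_num
          ring_nf

lemma core_le {θ : ℝ} (hθ0 : 0 < θ) (hθ1 : θ < 1) (f : ℝ → ℝ) {K : ℝ} (hK : 0 ≤ K)
    {a b c d : ℝ} (R : ℝ → ℝ)
    (hf : ∀ x ∈ Set.Icc a b, ∀ y ∈ Set.Icc c d, |f x - f y| ≤ K * |x - y|)
    (hdom : ∀ x ∈ Set.Icc a b, (∫ y in Set.Icc c d, |x - y| ^ (1 - 2 * θ)) ≤ R x)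
    (hR : IntegrableOn R (Set.Icc a b)) :
    (∫ x in Set.Icc a b, ∫ y in Set.Icc c d, |f x - f y| ^ 2 / |x - y| ^ (1 + 2 * θ))
      ≤ K ^ 2 * ∫ x in Set.Icc a b, R x := by
  have hp : (-1:ℝ) < 1 - 2 * θ := by linarith
  rw [← MeasureTheory.integral_const_mul]
  apply integral_mono_of_nonneg
  · apply Filter.Eventually.of_forall
    intro x
    apply MeasureTheory.integral_nonneg
    intro y
    positivity
  · exact (hR.const_mul _)
  · rw [Filter.EventuallyLE, ae_restrict_iff' measurableSet_Icc]
    apply Filter.Eventually.of_forall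
    intro x hx
    calc (∫ y in Set.Icc c d, |f x - f y| ^ 2 / |x - y| ^ (1 + 2 * θ))
        ≤ ∫ y in Set.Icc c d, K ^ 2 * |x - y| ^ (1 - 2 * θ) := by
          apply integral_mono_of_nonneg
          · apply Filter.Eventually.of_forall
            intro y; positivity
          · exact ((ion_abs hp x).const_mul _)
          · rw [Filter.EventuallyLE, ae_restrict_iff' measurableSet_Icc]
            apply Filter.Eventually.of_forall
            intro y hy
            exact integrand_le hθ0 f hK (hf x hx y hy)
      _ = K ^ 2 * ∫ y in Set.Icc c d, |x - y| ^ (1 - 2 * θ) :=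
          MeasureTheory.integral_const_mul _ _
      _ ≤ K ^ 2 * R x := by
          apply mul_le_mul_of_nonneg_left (hdom x hx) (by positivity)

lemma integrand_eq {θ : ℝ} (hθ0 : 0 < θ) {x y : ℝ} (h : x ≠ y) {c fx fy : ℝ}
    (hfx : fx - fy = c * (x - y)) :
    |fx - fy| ^ 2 / |x - y| ^ (1 + 2 * θ) = c ^ 2 * |x - y| ^ (1 - 2 * θ) := by
  have h0 : 0 < |x - y| := abs_pos.mpr (sub_ne_zero.mpr h)
  rw [hfx, abs_mul, mul_pow, sq_abs]
  rw [mul_div_assoc]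
  congr 1
  rw [← Real.rpow_natCast |x - y| 2, ← Real.rpow_sub h0]
  norm_num
  ring_nf

lemma diag_eq {θ : ℝ} (hθ0 : 0 < θ) (hθ1 : θ < 1) (f : ℝ → ℝ) {a b c0 s : ℝ}
    (hab : a ≤ b) (hf : ∀ x ∈ Set.Icc a b, f x = c0 + s * x) :
    (∫ x in Set.Icc a b, ∫ y in Set.Icc a b, |f x - f y| ^ 2 / |x - y| ^ (1 + 2 * θ))
      = s ^ 2 / (2 - 2 * θ)
          * ∫ x in Set.Icc a b, ((x - a) ^ (2 - 2 * θ) + (b - x) ^ (2 - 2 * θ)) := by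
  have hp : (-1:ℝ) < 1 - 2 * θ := by linarith
  have hq : (1:ℝ) - 2 * θ + 1 = 2 - 2 * θ := by ring
  rw [← MeasureTheory.integral_const_mul]
  apply setIntegral_congr_fun measurableSet_Icc
  intro x hx
  have hne : ∀ᵐ (y : ℝ), y ≠ x := MeasureTheory.ae_iff.mpr (by simp)
  have hinner : (∫ y in Set.Icc a b, |f x - f y| ^ 2 / |x - y| ^ (1 + 2 * θ))
      = ∫ y in Set.Icc a b, s ^ 2 * |x - y| ^ (1 - 2 * θ) := by
    apply setIntegral_congr_ae measurableSet_Icc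
    filter_upwards [hne] with y hy hyI
    exact integrand_eq hθ0 (Ne.symm hy)
      (by rw [hf x hx, hf y hyI]; ring)
  dsimp only
  rw [hinner, MeasureTheory.integral_const_mul, inner_diag hp hx.1 hx.2, hq]
  ring

end Aux

set_option maxHeartbeats 2000000 in
/-- Discrete Sobolev power estimate `‖u^μ‖_{𝐇^θₙ} ≲ ‖u‖_{𝐇^θₙ} ‖u‖_∞^{μ-1}` in
Gagliardo-seminorm form: for every `θ ∈ (0,1)` and `μ ≥ 1` there is `C > 0`,
independent of `n`, such that for every `n ≥ 1` and every nonnegative `u ∈ ℝⁿ`,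
`N_{θ,n}(𝔏_n(u^μ)) ≤ C ⬝ N_{θ,n}(𝔏_n u) ⬝ (max_{1≤i≤n} u_i)^{μ-1}`. -/
theorem stmt15 (θ : ℝ) (hθ0 : 0 < θ) (hθ1 : θ < 1) (μ : ℝ) (hμ : 1 ≤ μ) :
    ∃ C : ℝ, 0 < C ∧ ∀ (n : ℕ) (hn : 1 ≤ n), ∀ u : ℕ → ℝ,
      (∀ i ∈ Finset.Icc 1 n, 0 ≤ u i) →
      gagliardo θ n (linInterp n fun i => u i ^ μ) ≤
        C * gagliardo θ n (linInterp n u) *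
          ((Finset.Icc 1 n).sup' (Finset.nonempty_Icc.mpr hn) u) ^ (μ - 1) := by
  refine ⟨14 * μ, by positivity, ?_⟩
  intro n hn u hu
  -- setup
  set N : ℝ := (n : ℝ) + 1 with hNdef
  have hN : (0:ℝ) < N := by positivity
  set q : ℝ := 2 - 2 * θ with hqdef
  have hq0 : 0 < q := by simp only [hqdef]; linarith
  have hq2 : q ≤ 2 := by simp only [hqdef]; linarith
  have hp : (-1:ℝ) < 1 - 2 * θ := by linarith
  have hpq : (1 : ℝ) - 2 * θ + 1 = q := by simp only [hqdef]; ring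
  set M : ℝ := (Finset.Icc 1 n).sup' (Finset.nonempty_Icc.mpr hn) u with hMdef
  have hM0 : 0 ≤ M := by
    have h1 : (1:ℕ) ∈ Finset.Icc 1 n := Finset.mem_Icc.mpr ⟨le_refl 1, hn⟩
    exact (hu 1 h1).trans (Finset.le_sup' u h1)
  set v : ℕ → ℝ := vv n u with hvdef
  set w : ℕ → ℝ := vv n (fun i => u i ^ μ) with hwdef
  have hv0 : ∀ j, 0 ≤ v j := by
    intro j; simp only [hvdef, vv]; split
    · exact hu j ‹_›
    · exact le_refl 0
  have hvM : ∀ j, v j ≤ M := by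
    intro j; simp only [hvdef, vv]; split
    · exact Finset.le_sup' u ‹_›
    · exact hM0
  have hwv : ∀ j, w j = v j ^ μ := by
    intro j; simp only [hvdef, hwdef, vv]; split
    · rfl
    · rw [Real.zero_rpow (by linarith : μ ≠ 0)]
  set L : ℝ := μ * M ^ (μ - 1) with hLdef
  have hL0 : 0 ≤ L := by
    have := Real.rpow_nonneg hM0 (μ - 1)
    simp only [hLdef]; nlinarith
  set d : ℕ → ℝ := fun i => v (i + 1) - v i with hddef
  set D : ℕ → ℝ := fun i => w (i + 1) - w i with hDdef
  have hDd : ∀ i, |D i| ≤ L * |d i| := by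
    intro i
    simp only [hDdef, hddef, hwv]
    exact abs_rpow_diff_le hμ (hv0 _) (hv0 _) (hvM _) (hvM _)
  have hD2 : ∀ i, D i ^ 2 ≤ L ^ 2 * d i ^ 2 := by
    intro i
    have h1 : |D i| ^ 2 ≤ (L * |d i|) ^ 2 :=
      pow_le_pow_left₀ (abs_nonneg _) (hDd i) 2
    rw [sq_abs] at h1
    calc D i ^ 2 ≤ (L * |d i|) ^ 2 := h1
      _ = L ^ 2 * d i ^ 2 := by rw [mul_pow, sq_abs]
  set Qv : ℝ := 2 * (1 / N) ^ (q + 1) / (q + 1) with hQvdef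
  have hQv0 : 0 ≤ Qv := by
    have h1 := Real.rpow_nonneg (by positivity : (0:ℝ) ≤ 1 / N) (q + 1)
    have h2 : (0:ℝ) < q + 1 := by linarith
    simp only [hQvdef]
    positivity
  set f : ℝ → ℝ := linInterp n (fun i => u i ^ μ) with hfdef
  set g : ℝ → ℝ := linInterp n u with hgdef
  -- cell geometry
  have hcell : ∀ a : ℝ, a/N ≤ (a+1)/N := by
    intro a
    apply div_le_div_of_nonneg_right (by linarith) hN.le
  have hgap : ∀ a : ℝ, (a+1)/N = a/N + 1/N := fun a => add_div a 1 N
  -- interpolant formulas on cells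
  have hg_form : ∀ i, i ≤ n → ∀ x ∈ Set.Icc ((i:ℝ)/N) (((i:ℝ)+1)/N),
      g x = v i + d i * (N * x - (i:ℝ)) := by
    intro i hi x hx
    simp only [hNdef] at hx ⊢
    simp only [hgdef, hvdef, hddef]
    exact linInterp_on_cell n i u hi hx
  have hf_form : ∀ i, i ≤ n → ∀ x ∈ Set.Icc ((i:ℝ)/N) (((i:ℝ)+1)/N),
      f x = w i + D i * (N * x - (i:ℝ)) := by
    intro i hi x hx
    simp only [hNdef] at hx ⊢
    simp only [hfdef, hwdef, hDdef]
    exact linInterp_on_cell n i (fun i => u i ^ μ) hi hx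
  have hscale : 0 ≤ N ^ 2 / q * Qv := mul_nonneg (div_nonneg (sq_nonneg N) hq0.le) hQv0
  have hmono : ∀ X Y : ℝ, X ≤ Y → X * N ^ 2 / q * Qv ≤ Y * N ^ 2 / q * Qv := by
    intro X Y hXY
    have h1 : X * N ^ 2 / q * Qv = X * (N ^ 2 / q * Qv) := by ring
    have h2 : Y * N ^ 2 / q * Qv = Y * (N ^ 2 / q * Qv) := by ring
    rw [h1, h2]; exact mul_le_mul_of_nonneg_right hXY hscale
  -- exact value of diagonal terms
  have diagT : ∀ (F : ℝ → ℝ) (W DD : ℕ → ℝ), ∀ i, i ≤ n →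
      (∀ x ∈ Set.Icc ((i:ℝ)/N) (((i:ℝ)+1)/N), F x = W i + DD i * (N * x - (i:ℝ))) →
      (∫ x in Set.Icc ((i:ℝ)/N) (((i:ℝ)+1)/N),
         ∫ y in Set.Icc ((i:ℝ)/N) (((i:ℝ)+1)/N),
           |F x - F y| ^ 2 / |x - y| ^ (1 + 2 * θ))
        = DD i ^ 2 * N ^ 2 / q * Qv := by
    intro F W DD i hi hFform
    have hform : ∀ x ∈ Set.Icc ((i:ℝ)/N) (((i:ℝ)+1)/N),
        F x = (W i - DD i * (i:ℝ)) + (DD i * N) * x := by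
      intro x hx
      rw [hFform x hx]; ring
    rw [diag_eq hθ0 hθ1 F (hcell (i:ℝ)) hform]
    rw [show (2 : ℝ) - 2 * θ = q from hqdef.symm]
    rw [outer_val hq0 (hcell (i:ℝ))]
    rw [show ((i:ℝ)+1)/N - (i:ℝ)/N = 1/N by rw [hgap]; ring]
    rw [hQvdef]
    ring
  have h16q : 0 ≤ 16/q*Qv := mul_nonneg (div_nonneg (by norm_num) hq0.le) hQv0
  -- adjacent cells, y-cell to the right of x-cell
  have adjR : ∀ i, i + 1 ≤ n →
      (∫ x in Set.Icc ((i:ℝ)/N) (((i:ℝ)+1)/N),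
         ∫ y in Set.Icc (((i:ℝ)+1)/N) ((((i:ℝ)+1)+1)/N),
           |f x - f y| ^ 2 / |x - y| ^ (1 + 2 * θ))
        ≤ 32 * (D i ^ 2 + D (i+1) ^ 2) * N ^ 2 / q * Qv := by
    intro i hi1
    have hi : i ≤ n := by omega
    set a0 : ℝ := (i:ℝ)/N with ha0def
    set a1 : ℝ := ((i:ℝ)+1)/N with ha1def
    set a2 : ℝ := (((i:ℝ)+1)+1)/N with ha2def
    have ha01 : a0 ≤ a1 := hcell _
    have ha12 : a1 ≤ a2 := hcell _
    have hgap01 : a1 = a0 + 1/N := by rw [ha1def, ha0def, hgap]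
    have hgap12 : a2 = a1 + 1/N := by rw [ha2def, ha1def, hgap]
    have hK0 : 0 ≤ (|D i| + |D (i+1)|) * N := by positivity
    have hcast : ((i+1 : ℕ) : ℝ) = (i:ℝ) + 1 := by push_cast; ring
    have hf_form2 : ∀ y ∈ Set.Icc a1 a2, f y = w (i+1) + D (i+1) * (N * y - ((i:ℝ)+1)) := by
      intro y hy
      have hmem : y ∈ Set.Icc (((i+1 : ℕ) : ℝ)/N) ((((i+1 : ℕ) : ℝ)+1)/N) := by
        rw [hcast]; exact hy
      have := hf_form (i+1) hi1 y hmem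
      rwa [hcast] at this
    have hbound : ∀ x ∈ Set.Icc a0 a1, ∀ y ∈ Set.Icc a1 a2,
        |f x - f y| ≤ (|D i| + |D (i+1)|) * N * |x - y| := by
      intro x hx y hy
      have hx1 : N * x ≤ (i:ℝ)+1 := by
        have h := hx.2; rw [ha1def, le_div_iff₀ hN] at h; linarith [h]
      have hy1 : (i:ℝ)+1 ≤ N * y := by
        have h := hy.1; rw [ha1def, div_le_iff₀ hN] at h; linarith [h]
      have hxy : x ≤ y := le_trans hx.2 hy.1
      have hdiff : f x - f y
          = D i * (N*x - ((i:ℝ)+1)) - D (i+1) * (N*y - ((i:ℝ)+1)) := by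
        rw [hf_form i hi x hx, hf_form2 y hy]
        simp only [hDdef]
        ring
      calc |f x - f y|
          = |D i * (N*x - ((i:ℝ)+1)) + -(D (i+1) * (N*y - ((i:ℝ)+1)))| := by
            rw [hdiff, sub_eq_add_neg]
        _ ≤ |D i * (N*x - ((i:ℝ)+1))| + |-(D (i+1) * (N*y - ((i:ℝ)+1)))| := abs_add_le _ _
        _ = |D i| * (((i:ℝ)+1) - N*x) + |D (i+1)| * (N*y - ((i:ℝ)+1)) := by
            rw [abs_neg, abs_mul, abs_mul,
              abs_of_nonpos (by linarith : N*x - ((i:ℝ)+1) ≤ 0),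
              abs_of_nonneg (by linarith : (0:ℝ) ≤ N*y - ((i:ℝ)+1))]
            ring
        _ ≤ |D i| * (N*y - N*x) + |D (i+1)| * (N*y - N*x) := by
            apply add_le_add <;>
              exact mul_le_mul_of_nonneg_left (by linarith) (abs_nonneg _)
        _ = (|D i| + |D (i+1)|) * N * (y - x) := by ring
        _ = (|D i| + |D (i+1)|) * N * |x - y| := by
            have hxy2 : |x - y| = y - x := by
              rw [abs_sub_comm]; exact abs_of_nonneg (by linarith)
            rw [hxy2]
    have hdom : ∀ x ∈ Set.Icc a0 a1,
        (∫ y in Set.Icc a1 a2, |x - y| ^ (1 - 2*θ))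
          ≤ 16/q * ((x - a0)^q + (a1 - x)^q) := by
      intro x hx
      rw [inner_right hp hx.2 ha12, hpq]
      have hA0 : (0:ℝ) ≤ a1 - x := by linarith [hx.2]
      have hAh : a1 - x ≤ 1/N := by linarith [hx.1, hgap01]
      have hrb := ratio_bound hq0 hq2 hA0 hAh
      have e1 : (a1 - x) + 1/N = a2 - x := by linarith [hgap12]
      have e2 : 1/N - (a1 - x) = x - a0 := by linarith [hgap01]
      rw [e1, e2] at hrb
      calc ((a2 - x)^q - (a1 - x)^q)/q ≤ (16 * ((x - a0)^q + (a1 - x)^q))/q :=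
            div_le_div_of_nonneg_right hrb hq0.le
        _ = 16/q * ((x - a0)^q + (a1 - x)^q) := by ring
    have hcore := core_le hθ0 hθ1 f hK0
      (fun x => 16/q * ((x - a0)^q + (a1 - x)^q)) hbound hdom
      ((ion_outer hq0 ha01).const_mul _)
    have hKsq : ((|D i| + |D (i+1)|) * N)^2 ≤ 2*(D i^2 + D (i+1)^2) * N^2 := by
      have h1 := sq_nonneg (|D i| - |D (i+1)|)
      have h2 := sq_abs (D i)
      have h3 := sq_abs (D (i+1))
      nlinarith [sq_nonneg N]
    calc (∫ x in Set.Icc a0 a1, ∫ y in Set.Icc a1 a2,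
            |f x - f y| ^ 2 / |x - y| ^ (1 + 2 * θ))
        ≤ ((|D i| + |D (i+1)|) * N)^2
            * ∫ x in Set.Icc a0 a1, 16/q * ((x - a0)^q + (a1 - x)^q) := hcore
      _ = ((|D i| + |D (i+1)|) * N)^2 * (16/q * (2 * (a1 - a0)^(q+1)/(q+1))) := by
          rw [MeasureTheory.integral_const_mul, outer_val hq0 ha01]
      _ = ((|D i| + |D (i+1)|) * N)^2 * (16/q * Qv) := by
          rw [show a1 - a0 = 1/N by linarith [hgap01], ← hQvdef]
      _ ≤ (2*(D i^2 + D (i+1)^2) * N^2) * (16/q * Qv) :=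
          mul_le_mul_of_nonneg_right hKsq h16q
      _ = 32 * (D i ^ 2 + D (i+1) ^ 2) * N ^ 2 / q * Qv := by ring
  -- adjacent cells, y-cell to the left of x-cell
  have adjL : ∀ j, j + 1 ≤ n →
      (∫ x in Set.Icc (((j+1 : ℕ):ℝ)/N) ((((j+1 : ℕ):ℝ)+1)/N),
         ∫ y in Set.Icc ((j:ℝ)/N) (((j:ℝ)+1)/N),
           |f x - f y| ^ 2 / |x - y| ^ (1 + 2 * θ))
        ≤ 32 * (D (j+1) ^ 2 + D j ^ 2) * N ^ 2 / q * Qv := by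
    intro j hj1
    have hj : j ≤ n := by omega
    have hcast : ((j+1 : ℕ) : ℝ) = (j:ℝ) + 1 := by push_cast; ring
    rw [hcast]
    set b0 : ℝ := (j:ℝ)/N with hb0def
    set b1 : ℝ := ((j:ℝ)+1)/N with hb1def
    set b2 : ℝ := (((j:ℝ)+1)+1)/N with hb2def
    have hb01 : b0 ≤ b1 := hcell _
    have hb12 : b1 ≤ b2 := hcell _
    have hgap01 : b1 = b0 + 1/N := by rw [hb1def, hb0def, hgap]
    have hgap12 : b2 = b1 + 1/N := by rw [hb2def, hb1def, hgap]
    have hK0 : 0 ≤ (|D (j+1)| + |D j|) * N := by positivity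
    have hf_form2 : ∀ x ∈ Set.Icc b1 b2,
        f x = w (j+1) + D (j+1) * (N * x - ((j:ℝ)+1)) := by
      intro x hx
      have hmem : x ∈ Set.Icc (((j+1 : ℕ) : ℝ)/N) ((((j+1 : ℕ) : ℝ)+1)/N) := by
        rw [hcast]; exact hx
      have := hf_form (j+1) hj1 x hmem
      rwa [hcast] at this
    have hbound : ∀ x ∈ Set.Icc b1 b2, ∀ y ∈ Set.Icc b0 b1,
        |f x - f y| ≤ (|D (j+1)| + |D j|) * N * |x - y| := by
      intro x hx y hy
      have hx1 : (j:ℝ)+1 ≤ N * x := by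
        have h := hx.1; rw [hb1def, div_le_iff₀ hN] at h; linarith [h]
      have hy1 : N * y ≤ (j:ℝ)+1 := by
        have h := hy.2; rw [hb1def, le_div_iff₀ hN] at h; linarith [h]
      have hxy : y ≤ x := le_trans hy.2 hx.1
      have hdiff : f x - f y
          = D (j+1) * (N*x - ((j:ℝ)+1)) - D j * (N*y - ((j:ℝ)+1)) := by
        rw [hf_form2 x hx, hf_form j hj y hy]
        simp only [hDdef]
        ring
      calc |f x - f y|
          = |D (j+1) * (N*x - ((j:ℝ)+1)) + -(D j * (N*y - ((j:ℝ)+1)))| := by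
            rw [hdiff, sub_eq_add_neg]
        _ ≤ |D (j+1) * (N*x - ((j:ℝ)+1))| + |-(D j * (N*y - ((j:ℝ)+1)))| := abs_add_le _ _
        _ = |D (j+1)| * (N*x - ((j:ℝ)+1)) + |D j| * (((j:ℝ)+1) - N*y) := by
            rw [abs_neg, abs_mul, abs_mul,
              abs_of_nonneg (by linarith : (0:ℝ) ≤ N*x - ((j:ℝ)+1)),
              abs_of_nonpos (by linarith : N*y - ((j:ℝ)+1) ≤ 0)]
            ring
        _ ≤ |D (j+1)| * (N*x - N*y) + |D j| * (N*x - N*y) := by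
            apply add_le_add <;>
              exact mul_le_mul_of_nonneg_left (by linarith) (abs_nonneg _)
        _ = (|D (j+1)| + |D j|) * N * (x - y) := by ring
        _ = (|D (j+1)| + |D j|) * N * |x - y| := by
            have hxy2 : |x - y| = x - y := abs_of_nonneg (by linarith)
            rw [hxy2]
    have hdom : ∀ x ∈ Set.Icc b1 b2,
        (∫ y in Set.Icc b0 b1, |x - y| ^ (1 - 2*θ))
          ≤ 16/q * ((x - b1)^q + (b2 - x)^q) := by
      intro x hx
      rw [inner_left hp hb01 hx.1, hpq]
      have hA0 : (0:ℝ) ≤ x - b1 := by linarith [hx.1]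
      have hAh : x - b1 ≤ 1/N := by linarith [hx.2, hgap12]
      have hrb := ratio_bound hq0 hq2 hA0 hAh
      have e1 : (x - b1) + 1/N = x - b0 := by linarith [hgap01]
      have e2 : 1/N - (x - b1) = b2 - x := by linarith [hgap12]
      rw [e1, e2] at hrb
      calc ((x - b0)^q - (x - b1)^q)/q ≤ (16 * ((b2 - x)^q + (x - b1)^q))/q :=
            div_le_div_of_nonneg_right hrb hq0.le
        _ = 16/q * ((x - b1)^q + (b2 - x)^q) := by ring
    have hcore := core_le hθ0 hθ1 f hK0
      (fun x => 16/q * ((x - b1)^q + (b2 - x)^q)) hbound hdom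
      ((ion_outer hq0 hb12).const_mul _)
    have hKsq : ((|D (j+1)| + |D j|) * N)^2 ≤ 2*(D (j+1)^2 + D j^2) * N^2 := by
      have h1 := sq_nonneg (|D (j+1)| - |D j|)
      have h2 := sq_abs (D (j+1))
      have h3 := sq_abs (D j)
      nlinarith [sq_nonneg N]
    calc (∫ x in Set.Icc b1 b2, ∫ y in Set.Icc b0 b1,
            |f x - f y| ^ 2 / |x - y| ^ (1 + 2 * θ))
        ≤ ((|D (j+1)| + |D j|) * N)^2
            * ∫ x in Set.Icc b1 b2, 16/q * ((x - b1)^q + (b2 - x)^q) := hcore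
      _ = ((|D (j+1)| + |D j|) * N)^2 * (16/q * (2 * (b2 - b1)^(q+1)/(q+1))) := by
          rw [MeasureTheory.integral_const_mul, outer_val hq0 hb12]
      _ = ((|D (j+1)| + |D j|) * N)^2 * (16/q * Qv) := by
          rw [show b2 - b1 = 1/N by linarith [hgap12], ← hQvdef]
      _ ≤ (2*(D (j+1)^2 + D j^2) * N^2) * (16/q * Qv) :=
          mul_le_mul_of_nonneg_right hKsq h16q
      _ = 32 * (D (j+1) ^ 2 + D j ^ 2) * N ^ 2 / q * Qv := by ring
  -- unified pair bound
  have pair : ∀ i, i ≤ n → ∀ j, j ≤ n → i ≤ j + 1 → j ≤ i + 1 →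
      (∫ x in Set.Icc ((i:ℝ)/N) (((i:ℝ)+1)/N),
         ∫ y in Set.Icc ((j:ℝ)/N) (((j:ℝ)+1)/N),
           |f x - f y| ^ 2 / |x - y| ^ (1 + 2 * θ))
        ≤ 32 * (D i ^ 2 + D j ^ 2) * N ^ 2 / q * Qv := by
    intro i hi j hj hij hji
    rcases Nat.lt_trichotomy i j with hlt | heq | hgt
    · have hj1 : j = i + 1 := by omega
      subst hj1
      have hcast : ((i+1 : ℕ) : ℝ) = (i:ℝ) + 1 := by push_cast; ring
      rw [hcast]
      exact adjR i hj
    · subst heq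
      rw [diagT f w D i hi (hf_form i hi)]
      exact hmono _ _ (by nlinarith [sq_nonneg (D i)])
    · have hi1 : i = j + 1 := by omega
      subst hi1
      exact adjL j hi
  -- assemble the upper bound for f
  set e : ℕ → ℝ := fun i => 32 * D i ^ 2 * N ^ 2 / q * Qv with hedef
  have he0 : ∀ i, 0 ≤ e i := by
    intro i
    simp only [hedef]
    exact mul_nonneg (div_nonneg (by positivity) hq0.le) hQv0
  have step1 : gagliardoSq θ n f
      ≤ ∑ i ∈ Finset.range (n+1), ∑ j ∈ Finset.range (n+1),
          if i ≤ j + 1 ∧ j ≤ i + 1 then e i + e j else 0 := by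
    unfold gagliardoSq
    simp only [← hNdef]
    apply Finset.sum_le_sum
    intro i hi'
    apply Finset.sum_le_sum
    intro j hj'
    by_cases hc : i ≤ j + 1 ∧ j ≤ i + 1
    · rw [if_pos hc, if_pos hc]
      calc _ ≤ 32 * (D i ^ 2 + D j ^ 2) * N ^ 2 / q * Qv :=
            pair i (Nat.lt_succ_iff.mp (Finset.mem_range.mp hi'))
              j (Nat.lt_succ_iff.mp (Finset.mem_range.mp hj')) hc.1 hc.2
        _ = e i + e j := by simp only [hedef]; ring
    · rw [if_neg hc, if_neg hc]
  have step2 : gagliardoSq θ n f ≤ 6 * ∑ i ∈ Finset.range (n+1), e i :=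
    step1.trans (sum_comb he0)
  have step3 : ∑ i ∈ Finset.range (n+1), e i
      ≤ 32 * L ^ 2 * ∑ i ∈ Finset.range (n+1), d i ^ 2 * N ^ 2 / q * Qv := by
    rw [Finset.mul_sum]
    apply Finset.sum_le_sum
    intro i _
    calc e i = 32 * D i ^ 2 * N ^ 2 / q * Qv := by rw [hedef]
      _ ≤ (32 * (L ^ 2 * d i ^ 2)) * N ^ 2 / q * Qv :=
          hmono _ _ (by nlinarith [hD2 i])
      _ = 32 * L ^ 2 * (d i ^ 2 * N ^ 2 / q * Qv) := by ring
  -- lower bound for g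
  have hterm0 : ∀ i, 0 ≤ d i ^ 2 * N ^ 2 / q * Qv := by
    intro i
    exact mul_nonneg (div_nonneg (by positivity) hq0.le) hQv0
  have hglower : ∑ i ∈ Finset.range (n+1), d i ^ 2 * N ^ 2 / q * Qv
      ≤ gagliardoSq θ n g := by
    unfold gagliardoSq
    simp only [← hNdef]
    apply Finset.sum_le_sum
    intro i hi'
    have hi : i ≤ n := Nat.lt_succ_iff.mp (Finset.mem_range.mp hi')
    have hnn : ∀ j ∈ Finset.range (n+1),
        (0:ℝ) ≤ if i ≤ j + 1 ∧ j ≤ i + 1 then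
          ∫ x in Set.Icc ((i:ℝ)/N) (((i:ℝ)+1)/N),
            ∫ y in Set.Icc ((j:ℝ)/N) (((j:ℝ)+1)/N),
              |g x - g y| ^ 2 / |x - y| ^ (1 + 2 * θ)
        else 0 := by
      intro j _
      split
      · apply MeasureTheory.integral_nonneg
        intro x
        apply MeasureTheory.integral_nonneg
        intro y
        positivity
      · exact le_refl 0
    calc d i ^ 2 * N ^ 2 / q * Qv
        = (if i ≤ i + 1 ∧ i ≤ i + 1 then
            ∫ x in Set.Icc ((i:ℝ)/N) (((i:ℝ)+1)/N),
              ∫ y in Set.Icc ((i:ℝ)/N) (((i:ℝ)+1)/N),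
                |g x - g y| ^ 2 / |x - y| ^ (1 + 2 * θ)
          else 0) := by
          rw [if_pos ⟨Nat.le_succ i, Nat.le_succ i⟩,
            diagT g v d i hi (hg_form i hi)]
      _ ≤ _ := Finset.single_le_sum hnn hi'
  have hsum0 : 0 ≤ ∑ i ∈ Finset.range (n+1), d i ^ 2 * N ^ 2 / q * Qv :=
    Finset.sum_nonneg (fun i _ => hterm0 i)
  have hgSqg0 : 0 ≤ gagliardoSq θ n g := le_trans hsum0 hglower
  have hfinal : gagliardoSq θ n f ≤ (14 * L) ^ 2 * gagliardoSq θ n g := by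
    have h1 : gagliardoSq θ n f
        ≤ 192 * L ^ 2 * ∑ i ∈ Finset.range (n+1), d i ^ 2 * N ^ 2 / q * Qv := by
      calc gagliardoSq θ n f ≤ 6 * ∑ i ∈ Finset.range (n+1), e i := step2
        _ ≤ 6 * (32 * L ^ 2 * ∑ i ∈ Finset.range (n+1), d i ^ 2 * N ^ 2 / q * Qv) :=
            mul_le_mul_of_nonneg_left step3 (by norm_num)
        _ = 192 * L ^ 2 * ∑ i ∈ Finset.range (n+1), d i ^ 2 * N ^ 2 / q * Qv := by
            ring
    calc gagliardoSq θ n f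
        ≤ 192 * L ^ 2 * ∑ i ∈ Finset.range (n+1), d i ^ 2 * N ^ 2 / q * Qv := h1
      _ ≤ 192 * L ^ 2 * gagliardoSq θ n g :=
          mul_le_mul_of_nonneg_left hglower (by positivity)
      _ ≤ (14 * L) ^ 2 * gagliardoSq θ n g := by nlinarith [hgSqg0, sq_nonneg L]
  -- conclude via square roots
  unfold gagliardo
  calc Real.sqrt (gagliardoSq θ n f)
      ≤ Real.sqrt ((14 * L) ^ 2 * gagliardoSq θ n g) := Real.sqrt_le_sqrt hfinal
    _ = (14 * L) * Real.sqrt (gagliardoSq θ n g) := by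
        rw [Real.sqrt_mul (sq_nonneg _), Real.sqrt_sq (by positivity : (0:ℝ) ≤ 14 * L)]
    _ = 14 * μ * Real.sqrt (gagliardoSq θ n g) * M ^ (μ - 1) := by
        rw [hLdef]; ring
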